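/- Let φ = ξ₀|00⟩+ξ₁|01⟩+ξ₂|10⟩+ξ₃|11⟩ be a unit vector in ℂ⁴ and let T(φ) = [[ξ₀,ξ₁],[ξ₂,ξ₃]]. If det(T(φ)) = 0, then there exist 2×2 unitary matrices K₁ and K₂ such that (K₁ ⊗ K₂)φ = |00⟩. -/

import Mathlib

open Matrix Complex
open scoped ComplexConjugate

noncomputable section

/-- bit of qubit 1 (leftmost) in the index `2a+b`. -/
def bitHi (i : Fin 4) : Fin 2 := ⟨i.val / 2, by have := i.isLt; omega⟩
/-- bit of qubit 0 (rightmost). -/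
def bitLo (i : Fin 4) : Fin 2 := ⟨i.val % 2, by omega⟩

/-- Kronecker product `U ⊗ V` acting on `ℂ⁴`, with `|ab⟩` at index `2a+b`. -/
def kron2 (U V : Matrix (Fin 2) (Fin 2) ℂ) : Matrix (Fin 4) (Fin 4) ℂ :=
  fun i j => U (bitHi i) (bitHi j) * V (bitLo i) (bitLo j)

/-- The controlled-Z gate on two qubits. -/
def czGate : Matrix (Fin 4) (Fin 4) ℂ := diagonal ![1, 1, 1, -1]

/-- The matrix `T(φ)` of a 2-qubit state vector. -/
def Tmat (φ : Fin 4 → ℂ) : Matrix (Fin 2) (Fin 2) ℂ := !![φ 0, φ 1; φ 2, φ 3]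

/-- The basis state `|00⟩` in `ℂ⁴`. -/
def e00 : Fin 4 → ℂ := ![1, 0, 0, 0]

/-- The unitary sending a unit vector `w` to `e₀`. -/
def rotOf (w : Fin 2 → ℂ) : Matrix (Fin 2) (Fin 2) ℂ :=
  !![conj (w 0), conj (w 1); -(w 1), w 0]

lemma rotOf_mem (w : Fin 2 → ℂ) (hw : conj (w 0) * w 0 + conj (w 1) * w 1 = 1) :
    rotOf w ∈ Matrix.unitaryGroup (Fin 2) ℂ := by
  rw [Matrix.mem_unitaryGroup_iff]
  ext i j
  fin_cases i <;> fin_cases j <;>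
    simp [rotOf, Matrix.mul_apply, Fin.sum_univ_two, Matrix.star_apply, Matrix.one_apply] <;>
    first | exact hw | linear_combination hw | ring

lemma norm_to_conj (a b : ℂ) (h : ‖a‖ ^ 2 + ‖b‖ ^ 2 = 1) :
    conj a * a + conj b * b = 1 := by
  have ha : conj a * a = ((‖a‖ ^ 2 : ℝ) : ℂ) := by
    rw [mul_comm, Complex.mul_conj, Complex.normSq_eq_norm_sq]
  have hb : conj b * b = ((‖b‖ ^ 2 : ℝ) : ℂ) := by
    rw [mul_comm, Complex.mul_conj, Complex.normSq_eq_norm_sq]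
  rw [ha, hb]
  norm_cast

lemma key (u v : Fin 2 → ℂ)
    (hu : ‖u 0‖ ^ 2 + ‖u 1‖ ^ 2 = 1) (hv : ‖v 0‖ ^ 2 + ‖v 1‖ ^ 2 = 1)
    (φ : Fin 4 → ℂ) (hfac : ∀ i, φ i = u (bitHi i) * v (bitLo i)) :
    ∃ K₁ ∈ Matrix.unitaryGroup (Fin 2) ℂ, ∃ K₂ ∈ Matrix.unitaryGroup (Fin 2) ℂ,
      (kron2 K₁ K₂).mulVec φ = e00 := by
  have hu' := norm_to_conj _ _ hu
  have hv' := norm_to_conj _ _ hv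
  refine ⟨rotOf u, rotOf_mem u hu', rotOf v, rotOf_mem v hv', ?_⟩
  have bh0 : bitHi 0 = 0 := rfl
  have bh1 : bitHi 1 = 0 := rfl
  have bh2 : bitHi 2 = 1 := rfl
  have bh3 : bitHi 3 = 1 := rfl
  have bl0 : bitLo 0 = 0 := rfl
  have bl1 : bitLo 1 = 1 := rfl
  have bl2 : bitLo 2 = 0 := rfl
  have bl3 : bitLo 3 = 1 := rfl
  funext i
  have h0 := hfac 0; have h1 := hfac 1; have h2 := hfac 2; have h3 := hfac 3
  rw [bh0, bl0] at h0; rw [bh1, bl1] at h1; rw [bh2, bl2] at h2; rw [bh3, bl3] at h3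
  fin_cases i <;>
    simp [kron2, Matrix.mulVec, dotProduct, Fin.sum_univ_four, e00, rotOf,
      bh0, bh1, bh2, bh3, bl0, bl1, bl2, bl3, h0, h1, h2, h3] <;>
    first
      | linear_combination (conj (v 0) * v 0 + conj (v 1) * v 1) * hu' + hv'
      | linear_combination (-(conj (v 0) * v 0 + conj (v 1) * v 1)) * hu' - hv'
      | ring

/-- a 2-qubit state `φ` with `det T(φ) = 0` can be taken to `|00⟩`
by a local gate `K₁ ⊗ K₂`. -/
theorem stmt_7 (φ : Fin 4 → ℂ) (hunit : ∑ i, ‖φ i‖ ^ 2 = 1)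
    (hdet : (Tmat φ).det = 0) :
    ∃ K₁ ∈ Matrix.unitaryGroup (Fin 2) ℂ, ∃ K₂ ∈ Matrix.unitaryGroup (Fin 2) ℂ,
      (kron2 K₁ K₂).mulVec φ = e00 := by
  have hs : ‖φ 0‖ ^ 2 + ‖φ 1‖ ^ 2 + ‖φ 2‖ ^ 2 + ‖φ 3‖ ^ 2 = 1 := by
    simpa [Fin.sum_univ_four] using hunit
  have hdet' : φ 0 * φ 3 - φ 1 * φ 2 = 0 := by
    simpa [Tmat, Matrix.det_fin_two] using hdet
  by_cases hz : φ 0 = 0 ∧ φ 1 = 0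
  · obtain ⟨h0, h1⟩ := hz
    apply key ![0, 1] ![φ 2, φ 3]
    · simp
    · rw [h0, h1] at hs; simpa using hs
    · intro i; fin_cases i <;>
        simp [show bitHi 0 = 0 from rfl, show bitHi 1 = 0 from rfl,
          show bitHi 2 = 1 from rfl, show bitHi 3 = 1 from rfl,
          show bitLo 0 = 0 from rfl, show bitLo 1 = 1 from rfl,
          show bitLo 2 = 0 from rfl, show bitLo 3 = 1 from rfl, h0, h1]
  · obtain ⟨μ, hμ2, hμ3⟩ : ∃ μ : ℂ, φ 2 = μ * φ 0 ∧ φ 3 = μ * φ 1 := by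
      by_cases h0 : φ 0 = 0
      · have h1 : φ 1 ≠ 0 := fun h1 => hz ⟨h0, h1⟩
        have h2 : φ 2 = 0 := by
          have := hdet'
          rw [h0] at this
          rw [zero_mul, zero_sub, neg_eq_zero] at this
          exact (mul_eq_zero.mp this).resolve_left h1
        exact ⟨φ 3 / φ 1, by rw [h0, h2]; ring, by field_simp⟩
      · refine ⟨φ 2 / φ 0, by field_simp, ?_⟩
        field_simp
        linear_combination hdet'
    set c : ℝ := ‖φ 0‖ ^ 2 + ‖φ 1‖ ^ 2 with hc_def
    have hcpos : 0 < c := by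
      rcases not_and_or.mp hz with h | h
      · have h' : 0 < ‖φ 0‖ := norm_pos_iff.mpr h
        nlinarith [sq_nonneg ‖φ 1‖]
      · have h' : 0 < ‖φ 1‖ := norm_pos_iff.mpr h
        nlinarith [sq_nonneg ‖φ 0‖]
    set t : ℝ := Real.sqrt c with ht_def
    have htpos : 0 < t := Real.sqrt_pos.mpr hcpos
    have ht2 : t ^ 2 = c := Real.sq_sqrt hcpos.le
    have htne : (t : ℂ) ≠ 0 := by exact_mod_cast htpos.ne'
    have hn2 : ‖φ 2‖ = ‖μ‖ * ‖φ 0‖ := by rw [hμ2, norm_mul]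
    have hn3 : ‖φ 3‖ = ‖μ‖ * ‖φ 1‖ := by rw [hμ3, norm_mul]
    have hkey : c + ‖μ‖ ^ 2 * c = 1 := by
      rw [hn2, hn3] at hs
      rw [hc_def]
      linear_combination hs
    apply key ![(t : ℂ), μ * t] ![φ 0 / t, φ 1 / t]
    · have h1 : ‖((t : ℝ) : ℂ)‖ = t := by
        rw [Complex.norm_real]; exact abs_of_pos htpos
      have h2 : ‖μ * (t : ℂ)‖ = ‖μ‖ * t := by
        rw [norm_mul, h1]
      simp only [Matrix.cons_val_zero, Matrix.cons_val_one, Matrix.head_cons, h1, h2]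
      rw [← hkey, ← ht2]; ring
    · have h1 : ‖φ 0 / (t : ℂ)‖ = ‖φ 0‖ / t := by
        rw [norm_div, Complex.norm_real, Real.norm_eq_abs, abs_of_pos htpos]
      have h2 : ‖φ 1 / (t : ℂ)‖ = ‖φ 1‖ / t := by
        rw [norm_div, Complex.norm_real, Real.norm_eq_abs, abs_of_pos htpos]
      simp only [Matrix.cons_val_zero, Matrix.cons_val_one, Matrix.head_cons]
      rw [h1, h2, div_pow, div_pow, ← add_div, ← hc_def, ← ht2]
      field_simp
    · intro i; fin_cases i
      · show φ 0 = (t : ℂ) * (φ 0 / t); field_simp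
      · show φ 1 = (t : ℂ) * (φ 1 / t); field_simp
      · show φ 2 = μ * t * (φ 0 / t); rw [hμ2]; field_simp
      · show φ 3 = μ * t * (φ 1 / t); rw [hμ3]; field_simp
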